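/- Let f : X → Y be a compact-preserving function from a Fréchet space X to a Hausdorff T₁-space Y, and let x ∈ X. If f[x] = {f(x)}, where f[x] = {y ∈ Y : x ∈ closure(f⁻¹(y))}, then f is continuous at x. -/

import Mathlib

open Filter Topology Set

def CompactPreserving {X Y : Type*} [TopologicalSpace X] [TopologicalSpace Y]
    (f : X → Y) : Prop := ∀ K : Set X, IsCompact K → IsCompact (f '' K)

def oscSet {X Y : Type*} [TopologicalSpace X] (f : X → Y) (x : X) : Set Y :=
  {y | x ∈ closure (f ⁻¹' {y})}

theorem stmt12 {X Y : Type*} [TopologicalSpace X] [TopologicalSpace Y]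
    [FrechetUrysohnSpace X] [T2Space Y] [T1Space Y]
    (f : X → Y) (hf : CompactPreserving f) (x : X)
    (h : oscSet f x = {f x}) : ContinuousAt f x := by
  classical
  rw [ContinuousAt, tendsto_nhds]
  by_contra hc
  push_neg at hc
  obtain ⟨V, hVo, hfxV, hV⟩ := hc
  -- x is in the closure of f ⁻¹' Vᶜ
  have hx : x ∈ closure (f ⁻¹' Vᶜ) := by
    rw [preimage_compl, closure_compl]
    intro hxi
    exact hV (mem_interior_iff_mem_nhds.mp hxi)
  obtain ⟨u, hu_mem, hu_lim⟩ := mem_closure_iff_seq_limit.mp hx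
  -- image of the compact set {x} ∪ range u
  have hK : IsCompact (insert x (Set.range u)) := hu_lim.isCompact_insert_range
  have hfK : IsCompact (f '' insert x (Set.range u)) := hf _ hK
  -- cluster point of the sequence f ∘ u in f '' K
  have hle : Filter.map (f ∘ u) atTop ≤ 𝓟 (f '' insert x (Set.range u)) := by
    rw [le_principal_iff, mem_map]
    filter_upwards [] with n
    exact ⟨u n, Or.inr ⟨n, rfl⟩, rfl⟩
  obtain ⟨y, hyK, hy⟩ := hfK hle
  -- y ∈ Vᶜ
  have hyVc : y ∈ Vᶜ := by
    have : y ∈ closure Vᶜ := mem_closure_iff_clusterPt.mpr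
      (hy.mono (le_principal_iff.mpr (by
        rw [mem_map]; exact Filter.Eventually.of_forall fun n => hu_mem n)))
    rwa [hVo.isClosed_compl.closure_eq] at this
  have hyfx : y ≠ f x := fun hyx => hyVc (hyx ▸ hfxV)
  -- dichotomy on the fiber {n | f (u n) = y}
  by_cases hfib : {n | f (u n) = y}.Infinite
  · -- then x ∈ closure (f ⁻¹' {y}), so y ∈ oscSet f x = {f x}, contradiction
    have hfreq : ∃ᶠ n in atTop, u n ∈ f ⁻¹' {y} :=
      Nat.frequently_atTop_iff_infinite.mpr hfib
    have : x ∈ closure (f ⁻¹' {y}) := mem_closure_of_frequently_of_tendsto hfreq hu_lim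
    have : y ∈ oscSet f x := this
    rw [h] at this
    exact hyfx this
  · -- fiber finite; remove it
    rw [Set.not_infinite] at hfib
    set N : Set ℕ := {n | f (u n) ≠ y} with hN
    have hNinf : N.Infinite := by
      have h2 := Set.Finite.infinite_compl (α := ℕ) hfib
      have : N = {n | f (u n) = y}ᶜ := by ext n; simp [hN]
      rw [this]; exact h2
    set w : ℕ → X := fun n => u (Nat.nth (· ∈ N) n) with hw
    have hw_lim : Tendsto w atTop (𝓝 x) :=
      hu_lim.comp ((Nat.nth_strictMono hNinf).tendsto_atTop)
    have hK' : IsCompact (insert x (Set.range w)) := hw_lim.isCompact_insert_range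
    have hfK' : IsCompact (f '' insert x (Set.range w)) := hf _ hK'
    -- y ∈ closure (f '' K') = f '' K'
    have hyc : y ∈ closure (f '' insert x (Set.range w)) := by
      rw [mem_closure_iff_nhds]
      intro U hU
      have hfreq : ∃ᶠ n in atTop, f (u n) ∈ U :=
        mapClusterPt_iff_frequently.mp hy U hU
      have hNU : (({n | f (u n) ∈ U} : Set ℕ) \ {n | f (u n) = y}).Infinite :=
        (Nat.frequently_atTop_iff_infinite.mp hfreq).diff hfib
      obtain ⟨n, hnU, hnN⟩ := hNU.nonempty
      refine ⟨f (u n), hnU, ⟨u n, Or.inr ?_, rfl⟩⟩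
      exact ⟨Nat.count (· ∈ N) n, by rw [hw]; simp only; congr 1; exact Nat.nth_count hnN⟩
    have hymem : y ∈ f '' insert x (Set.range w) := hfK'.isClosed.closure_eq ▸ hyc
    obtain ⟨z, hz, hzy⟩ := hymem
    rcases hz with rfl | ⟨m, rfl⟩
    · exact absurd hzy.symm hyfx
    · have : Nat.nth (· ∈ N) m ∈ N := Nat.nth_mem_of_infinite hNinf m
      exact this hzy
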